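/- arXiv:1809.07024 — 7 statements merged into one kernel-verified Lean document; each statement's English description precedes it below -/
import Mathlib

section
/- Let (A₁ →d A₀, μ₂, μ₃, α₀, α₁) be a skeletal 2-term HA∞-algebra (that is, d = 0). Then the actions a·m := μ₂(a,m) and m·a := μ₂(m,a), together with β := α₁, make A₁ a hom-bimodule over the hom-associative algebra (A₀, μ₂, α₀); in particular α₀(a)·(b·m) = μ₂(a,b)·α₁(m), α₁(m)·μ₂(a,b) = (m·a)·α₀(b), and α₀(a)·(m·b) = (a·m)·α₀(b) for all a, b ∈ A₀ and m ∈ A₁. -/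
/-- A 2-term HA∞-algebra `(A₁ →d A₀, μ₂, μ₃, α₀, α₁)` over a field `k`.
`m00`, `m01`, `m10` are the three components of the bilinear map `μ₂`,
`m3` is the trilinear map `μ₃`, and `a0`, `a1` are the linear maps `α₀`, `α₁`. -/
structure TwoTermHA (k : Type*) [Field k] (A0 A1 : Type*)
    [AddCommGroup A0] [Module k A0] [AddCommGroup A1] [Module k A1] where
  d : A1 →ₗ[k] A0
  m00 : A0 →ₗ[k] A0 →ₗ[k] A0
  m01 : A0 →ₗ[k] A1 →ₗ[k] A1
  m10 : A1 →ₗ[k] A0 →ₗ[k] A1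
  m3 : A0 →ₗ[k] A0 →ₗ[k] A0 →ₗ[k] A1
  a0 : A0 →ₗ[k] A0
  a1 : A1 →ₗ[k] A1
  comm_d : ∀ m, a0 (d m) = d (a1 m)
  comm_m3 : ∀ a b c, a1 (m3 a b c) = m3 (a0 a) (a0 b) (a0 c)
  axb : ∀ a b, a0 (m00 a b) = m00 (a0 a) (a0 b)
  axc : ∀ a m, a1 (m01 a m) = m01 (a0 a) (a1 m)
  axd : ∀ m a, a1 (m10 m a) = m10 (a1 m) (a0 a)
  axe : ∀ a m, d (m01 a m) = m00 a (d m)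
  axf : ∀ m a, d (m10 m a) = m00 (d m) a
  axg : ∀ m n, m01 (d m) n = m10 m (d n)
  axh : ∀ a b c, d (m3 a b c) = m00 (m00 a b) (a0 c) - m00 (a0 a) (m00 b c)
  axi1 : ∀ a b m, m3 a b (d m) = m01 (m00 a b) (a1 m) - m01 (a0 a) (m01 b m)
  axi2 : ∀ a m c, m3 a (d m) c = m10 (m01 a m) (a0 c) - m01 (a0 a) (m10 m c)
  axi3 : ∀ m b c, m3 (d m) b c = m10 (m10 m b) (a0 c) - m10 (a1 m) (m00 b c)
  axj : ∀ a b c e,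
    m3 (m00 a b) (a0 c) (a0 e) - m3 (a0 a) (m00 b c) (a0 e)
        + m3 (a0 a) (a0 b) (m00 c e)
      = m10 (m3 a b c) (a0 (a0 e)) + m01 (a0 (a0 a)) (m3 b c e)

/-- Let `(A₁ →d A₀, μ₂, μ₃, α₀, α₁)` be a skeletal 2-term HA∞-algebra (`d = 0`).  Then the
actions `a·m := μ₂(a,m)`, `m·a := μ₂(m,a)` together with `β := α₁` make `A₁` a hom-bimodule
over the hom-associative algebra `(A₀, μ₂, α₀)`. -/
theorem skeletal_hom_bimodule
    {k A0 A1 : Type*} [Field k]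
    [AddCommGroup A0] [Module k A0] [AddCommGroup A1] [Module k A1]
    (T : TwoTermHA k A0 A1) (hskel : T.d = 0) :
    (∀ a m, T.a1 (T.m01 a m) = T.m01 (T.a0 a) (T.a1 m))
      ∧ (∀ m a, T.a1 (T.m10 m a) = T.m10 (T.a1 m) (T.a0 a))
      ∧ (∀ a b m, T.m01 (T.a0 a) (T.m01 b m) = T.m01 (T.m00 a b) (T.a1 m))
      ∧ (∀ a b m, T.m10 (T.a1 m) (T.m00 a b) = T.m10 (T.m10 m a) (T.a0 b))
      ∧ (∀ a b m, T.m01 (T.a0 a) (T.m10 m b) = T.m10 (T.m01 a m) (T.a0 b)) := by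
  refine ⟨T.axc, T.axd, ?_, ?_, ?_⟩
  · intro a b m
    have h := T.axi1 a b m
    rw [hskel] at h
    simp at h
    exact (sub_eq_zero.mp h.symm).symm
  · intro a b m
    have h := T.axi3 m a b
    rw [hskel] at h
    simp at h
    exact (sub_eq_zero.mp h.symm).symm
  · intro a b m
    have h := T.axi2 a m b
    rw [hskel] at h
    simp at h
    exact (sub_eq_zero.mp h.symm).symm
end

section
/- Let (A, μ, α) be a hom-associative algebra over a field k, let (M, β, ·) be a hom-bimodule over it, and let θ ∈ C³_{α,β}(A,M) be a Hochschild 3-cocycle, i.e. δ_{α,β}(θ) = 0. Set A₀ := A, A₁ := M, d := 0, μ₂(a,b) := μ(a,b), μ₂(a,m) := a·m, μ₂(m,a) := m·a, μ₃ := θ, α₀ := α, α₁ := β. Then (A₁ →d A₀, μ₂, μ₃, α₀, α₁) is a skeletal 2-term HA∞-algebra, i.e. all the defining axioms of a 2-term HA∞-algebra hold for this data. -/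
/-- Let `(A, μ, α)` be a hom-associative algebra over a field `k`, let `(M, β, ·)` be a
hom-bimodule over it, and let `θ ∈ C³_{α,β}(A,M)` be a Hochschild 3-cocycle.  Then setting
`A₀ := A`, `A₁ := M`, `d := 0`, `μ₂` given by `μ` and the two actions, `μ₃ := θ`,
`α₀ := α`, `α₁ := β` yields a skeletal 2-term HA∞-algebra. -/
theorem cocycle_gives_skeletal
    {k A M : Type*} [Field k]
    [AddCommGroup A] [Module k A] [AddCommGroup M] [Module k M]
    (μ : A →ₗ[k] A →ₗ[k] A) (αA : A →ₗ[k] A)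
    (actL : A →ₗ[k] M →ₗ[k] M) (actR : M →ₗ[k] A →ₗ[k] M) (β : M →ₗ[k] M)
    (hαμ : ∀ a b, αA (μ a b) = μ (αA a) (αA b))
    (hassoc : ∀ a b c, μ (αA a) (μ b c) = μ (μ a b) (αA c))
    (hβL : ∀ a m, β (actL a m) = actL (αA a) (β m))
    (hβR : ∀ m a, β (actR m a) = actR (β m) (αA a))
    (hbm1 : ∀ a b m, actL (αA a) (actL b m) = actL (μ a b) (β m))
    (hbm2 : ∀ a b m, actR (β m) (μ a b) = actR (actR m a) (αA b))
    (hbm3 : ∀ a b m, actL (αA a) (actR m b) = actR (actL a m) (αA b))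
    (θ : A →ₗ[k] A →ₗ[k] A →ₗ[k] M)
    (hθcompat : ∀ a b c, θ (αA a) (αA b) (αA c) = β (θ a b c))
    (hθcocycle : ∀ a b c e,
      actL (αA (αA a)) (θ b c e)
        - θ (μ a b) (αA c) (αA e)
        + θ (αA a) (μ b c) (αA e)
        - θ (αA a) (αA b) (μ c e)
        + actR (θ a b c) (αA (αA e)) = 0) :
    ∃ T : TwoTermHA k A M,
      T.d = 0 ∧ T.m00 = μ ∧ T.m01 = actL ∧ T.m10 = actR ∧ T.m3 = θ
        ∧ T.a0 = αA ∧ T.a1 = β := by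
  refine ⟨⟨0, μ, actL, actR, θ, αA, β, ?_, ?_, ?_, ?_, ?_, ?_, ?_, ?_, ?_, ?_, ?_, ?_, ?_⟩,
    rfl, rfl, rfl, rfl, rfl, rfl, rfl⟩
  · simp
  · intro a b c; exact (hθcompat a b c).symm
  · exact hαμ
  · exact hβL
  · exact hβR
  · simp
  · simp
  · simp
  · intro a b c; simp [eq_sub_iff_add_eq, hassoc]
  · intro a b m; simp [eq_sub_iff_add_eq, hbm1]
  · intro a m c; simp [eq_sub_iff_add_eq, hbm3]
  · intro m b c; simp [eq_sub_iff_add_eq, hbm2, hβR]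
  · intro a b c e
    have h := hθcocycle a b c e
    linear_combination (norm := abel) -h
end

section
/- Let (A₁ →d A₀, μ₂, μ₃, α₀, α₁) be a strict 2-term HA∞-algebra (that is, μ₃ = 0). Define μ_A(m,n) := μ₂(d(m), n) for m, n ∈ A₁. Then μ_A(m,n) = μ₂(m, d(n)); (A₁, μ_A, α₁) is a hom-associative algebra (α₁(μ_A(m,n)) = μ_A(α₁(m),α₁(n)) and μ_A(α₁(m), μ_A(n,p)) = μ_A(μ_A(m,n), α₁(p))); and d is a morphism of hom-associative algebras from (A₁, μ_A, α₁) to (A₀, μ₂, α₀), i.e. d(μ_A(m,n)) = μ₂(d(m), d(n)) and α₀ ∘ d = d ∘ α₁. -/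
/-- Let `(A₁ →d A₀, μ₂, μ₃, α₀, α₁)` be a strict 2-term HA∞-algebra (`μ₃ = 0`) and define
`μ_A(m,n) := μ₂(d(m), n)` on `A₁`.  Then `μ_A(m,n) = μ₂(m, d(n))`, `(A₁, μ_A, α₁)` is a
hom-associative algebra, and `d` is a morphism of hom-associative algebras from
`(A₁, μ_A, α₁)` to `(A₀, μ₂, α₀)`. -/
theorem strict_A1_hom_associative_and_d_morphism
    {k A0 A1 : Type*} [Field k]
    [AddCommGroup A0] [Module k A0] [AddCommGroup A1] [Module k A1]
    (T : TwoTermHA k A0 A1) (hstrict : T.m3 = 0) :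
    (∀ m n, T.m01 (T.d m) n = T.m10 m (T.d n))
      ∧ (∀ m n, T.a1 (T.m01 (T.d m) n) = T.m01 (T.d (T.a1 m)) (T.a1 n))
      ∧ (∀ m n p, T.m01 (T.d (T.a1 m)) (T.m01 (T.d n) p)
          = T.m01 (T.d (T.m01 (T.d m) n)) (T.a1 p))
      ∧ (∀ m n, T.d (T.m01 (T.d m) n) = T.m00 (T.d m) (T.d n))
      ∧ (∀ m, T.a0 (T.d m) = T.d (T.a1 m)) := by
  refine ⟨T.axg, ?_, ?_, ?_, T.comm_d⟩
  · intro m n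
    rw [T.axc, T.comm_d]
  · intro m n p
    have h := T.axi1 (T.d m) (T.d n) p
    rw [hstrict] at h
    simp only [LinearMap.zero_apply] at h
    have h2 : T.m01 (T.d (T.a1 m)) (T.m01 (T.d n) p)
        = T.m01 (T.m00 (T.d m) (T.d n)) (T.a1 p) := by
      rw [← T.comm_d]
      exact (sub_eq_zero.mp h.symm).symm
    rw [h2, T.axe]
  · intro m n
    rw [T.axe]
end

section
/- Let (A₁ →d A₀, μ₂, μ₃, α₀, α₁) be a strict 2-term HA∞-algebra (that is, μ₃ = 0), and set μ_A(m,n) := μ₂(d(m),n) on A₁, φ(b,m) := μ₂(b,m) and φ(m,b) := μ₂(m,b) for b ∈ A₀, m ∈ A₁. Then ((A₁, μ_A, α₁), (A₀, μ₂, α₀), d, φ) is a crossed module of hom-associative algebras: φ defines a hom-bimodule structure on A₁ over (A₀, μ₂, α₀) with respect to α₁, and for all m, n ∈ A₁ and b ∈ A₀ one has d(φ(b,m)) = μ₂(b, d(m)), d(φ(m,b)) = μ₂(d(m), b), φ(d(m), n) = μ_A(m,n), φ(m, d(n)) = μ_A(m,n), φ(α₀(b), μ_A(m,n)) = μ_A(φ(b,m),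 α₁(n)), and φ(μ_A(m,n), α₀(b)) = μ_A(α₁(m), φ(n,b)). -/
/-- Let `(A₁ →d A₀, μ₂, μ₃, α₀, α₁)` be a strict 2-term HA∞-algebra (`μ₃ = 0`), and set
`μ_A(m,n) := μ₂(d(m),n)` on `A₁`, `φ(b,m) := μ₂(b,m)`, `φ(m,b) := μ₂(m,b)`.  Then
`((A₁, μ_A, α₁), (A₀, μ₂, α₀), d, φ)` is a crossed module of hom-associative algebras. -/
theorem strict_gives_crossed_module
    {k A0 A1 : Type*} [Field k]
    [AddCommGroup A0] [Module k A0] [AddCommGroup A1] [Module k A1]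
    (T : TwoTermHA k A0 A1) (hstrict : T.m3 = 0) :
    -- (A₁, μ_A, α₁) is a hom-associative algebra
    (∀ m n, T.a1 (T.m01 (T.d m) n) = T.m01 (T.d (T.a1 m)) (T.a1 n))
      ∧ (∀ m n p, T.m01 (T.d (T.a1 m)) (T.m01 (T.d n) p)
          = T.m01 (T.d (T.m01 (T.d m) n)) (T.a1 p))
      -- (A₀, μ₂, α₀) is a hom-associative algebra
      ∧ (∀ a b, T.a0 (T.m00 a b) = T.m00 (T.a0 a) (T.a0 b))
      ∧ (∀ a b c, T.m00 (T.a0 a) (T.m00 b c) = T.m00 (T.m00 a b) (T.a0 c))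
      -- d is a morphism of hom-associative algebras
      ∧ (∀ m, T.d (T.a1 m) = T.a0 (T.d m))
      ∧ (∀ m n, T.d (T.m01 (T.d m) n) = T.m00 (T.d m) (T.d n))
      -- φ defines a hom-bimodule structure on A₁ over (A₀, μ₂, α₀) with respect to α₁
      ∧ (∀ b m, T.a1 (T.m01 b m) = T.m01 (T.a0 b) (T.a1 m))
      ∧ (∀ m b, T.a1 (T.m10 m b) = T.m10 (T.a1 m) (T.a0 b))
      ∧ (∀ a b m, T.m01 (T.a0 a) (T.m01 b m) = T.m01 (T.m00 a b) (T.a1 m))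
      ∧ (∀ a b m, T.m10 (T.a1 m) (T.m00 a b) = T.m10 (T.m10 m a) (T.a0 b))
      ∧ (∀ a b m, T.m01 (T.a0 a) (T.m10 m b) = T.m10 (T.m01 a m) (T.a0 b))
      -- the six crossed-module identities
      ∧ (∀ b m, T.d (T.m01 b m) = T.m00 b (T.d m))
      ∧ (∀ m b, T.d (T.m10 m b) = T.m00 (T.d m) b)
      ∧ (∀ m n, T.m01 (T.d m) n = T.m01 (T.d m) n)
      ∧ (∀ m n, T.m10 m (T.d n) = T.m01 (T.d m) n)
      ∧ (∀ b m n, T.m01 (T.a0 b) (T.m01 (T.d m) n) = T.m01 (T.d (T.m01 b m)) (T.a1 n))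
      ∧ (∀ b m n, T.m10 (T.m01 (T.d m) n) (T.a0 b) = T.m01 (T.d (T.a1 m)) (T.m10 n b)) := by
  have hz : ∀ a b c, T.m3 a b c = 0 := by simp [hstrict]
  have h0 : ∀ a b c, T.m00 (T.m00 a b) (T.a0 c) = T.m00 (T.a0 a) (T.m00 b c) := by
    intro a b c
    have h := T.axh a b c
    rw [hz] at h; simp at h
    exact sub_eq_zero.mp h.symm
  have hi1 : ∀ a b m, T.m01 (T.m00 a b) (T.a1 m) = T.m01 (T.a0 a) (T.m01 b m) := by
    intro a b m
    have h := T.axi1 a b m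
    rw [hz] at h
    exact sub_eq_zero.mp h.symm
  have hi2 : ∀ a m c, T.m10 (T.m01 a m) (T.a0 c) = T.m01 (T.a0 a) (T.m10 m c) := by
    intro a m c
    have h := T.axi2 a m c
    rw [hz] at h
    exact sub_eq_zero.mp h.symm
  have hi3 : ∀ m b c, T.m10 (T.m10 m b) (T.a0 c) = T.m10 (T.a1 m) (T.m00 b c) := by
    intro m b c
    have h := T.axi3 m b c
    rw [hz] at h
    exact sub_eq_zero.mp h.symm
  refine ⟨?_, ?_, T.axb, fun a b c => (h0 a b c).symm, fun m => (T.comm_d m).symm,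
    ?_, T.axc, T.axd, fun a b m => (hi1 a b m).symm, fun a b m => (hi3 m a b).symm,
    fun a b m => (hi2 a m b).symm, T.axe, T.axf, fun m n => rfl,
    fun m n => (T.axg m n).symm, ?_, ?_⟩
  · intro m n
    rw [T.axc, T.comm_d]
  · intro m n p
    rw [← T.comm_d, T.axe, hi1]
  · intro m n
    exact T.axe (T.d m) n
  · intro b m n
    rw [T.axe, hi1]
  · intro b m n
    rw [hi2, T.comm_d]
end

section
/- Let ((A, μ_A, α_A), (B, μ_B, α_B), dt, φ) be a crossed module of hom-associative algebras. Set A₁ := A, A₀ := B, d := dt, α₁ := α_A, α₀ := α_B, and define μ₂(b,b') := μ_B(b,b'), μ₂(b,m) := φ(b,m), μ₂(m,b) := φ(m,b) for b, b' ∈ A₀ and m ∈ A₁, and μ₃ := 0. Then (A₁ →d A₀, μ₂, μ₃, α₀, α₁) is a strict 2-term HA∞-algebra, i.e. all the defining axioms of a 2-term HA∞-algebra hold for this data. -/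
/-- Let `((A, μ_A, α_A), (B, μ_B, α_B), dt, φ)` be a crossed module of hom-associative
algebras.  Setting `A₁ := A`, `A₀ := B`, `d := dt`, `α₁ := α_A`, `α₀ := α_B`,
`μ₂(b,b') := μ_B(b,b')`, `μ₂(b,m) := φ(b,m)`, `μ₂(m,b) := φ(m,b)` and `μ₃ := 0` yields a
strict 2-term HA∞-algebra. -/
theorem crossed_module_gives_strict
    {k A B : Type*} [Field k]
    [AddCommGroup A] [Module k A] [AddCommGroup B] [Module k B]
    (μA : A →ₗ[k] A →ₗ[k] A) (αA : A →ₗ[k] A)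
    (μB : B →ₗ[k] B →ₗ[k] B) (αB : B →ₗ[k] B)
    (dt : A →ₗ[k] B)
    (φL : B →ₗ[k] A →ₗ[k] A) (φR : A →ₗ[k] B →ₗ[k] A)
    -- (A, μ_A, α_A) and (B, μ_B, α_B) are hom-associative algebras
    (hαA : ∀ m n, αA (μA m n) = μA (αA m) (αA n))
    (hassA : ∀ m n p, μA (αA m) (μA n p) = μA (μA m n) (αA p))
    (hαB : ∀ a b, αB (μB a b) = μB (αB a) (αB b))
    (hassB : ∀ a b c, μB (αB a) (μB b c) = μB (μB a b) (αB c))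
    -- dt is a morphism of hom-associative algebras
    (hdtα : ∀ m, dt (αA m) = αB (dt m))
    (hdtμ : ∀ m n, dt (μA m n) = μB (dt m) (dt n))
    -- φ defines a hom-bimodule structure on A over (B, μ_B, α_B) with respect to α_A
    (hφL : ∀ b m, αA (φL b m) = φL (αB b) (αA m))
    (hφR : ∀ m b, αA (φR m b) = φR (αA m) (αB b))
    (hbm1 : ∀ a b m, φL (αB a) (φL b m) = φL (μB a b) (αA m))
    (hbm2 : ∀ a b m, φR (αA m) (μB a b) = φR (φR m a) (αB b))
    (hbm3 : ∀ a b m, φL (αB a) (φR m b) = φR (φL a m) (αB b))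
    -- the six crossed-module identities
    (hcm1 : ∀ b m, dt (φL b m) = μB b (dt m))
    (hcm2 : ∀ m b, dt (φR m b) = μB (dt m) b)
    (hcm3 : ∀ m n, φL (dt m) n = μA m n)
    (hcm4 : ∀ m n, φR m (dt n) = μA m n)
    (hcm5 : ∀ b m n, φL (αB b) (μA m n) = μA (φL b m) (αA n))
    (hcm6 : ∀ b m n, φR (μA m n) (αB b) = μA (αA m) (φR n b)) :
    ∃ T : TwoTermHA k B A,
      T.d = dt ∧ T.m00 = μB ∧ T.m01 = φL ∧ T.m10 = φR ∧ T.m3 = 0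
        ∧ T.a0 = αB ∧ T.a1 = αA := by
  refine ⟨{ d := dt, m00 := μB, m01 := φL, m10 := φR, m3 := 0, a0 := αB, a1 := αA
            comm_d := fun m => (hdtα m).symm
            comm_m3 := fun a b c => by simp
            axb := hαB
            axc := hφL
            axd := hφR
            axe := hcm1
            axf := hcm2
            axg := fun m n => by rw [hcm3, hcm4]
            axh := fun a b c => by simp [hassB]
            axi1 := fun a b m => by simp [hbm1]
            axi2 := fun a m c => by simp [hbm3]
            axi3 := fun m b c => by simp [hbm2]
            axj := fun a b c e => by simp }, rfl, rfl, rfl, rfl, rfl, rfl, rfl⟩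
end

section
/- Let (A₁ →d A₀, μ₂, μ₃, α₀, α₁) be a 2-term HA∞-algebra. On C₁ := A₀ ⊕ A₁ define the bilinear map μ((a,m),(b,n)) := (μ₂(a,b), μ₂(a,n) + μ₂(m,b) + μ₂(d(m),n)), the source and target maps s(a,m) := a, t(a,m) := a + d(m), and Φ₁(a,m) := (α₀(a), α₁(m)). Then for all ξ, η ∈ C₁: s(μ(ξ,η)) = μ₂(s(ξ), s(η)), t(μ(ξ,η)) = μ₂(t(ξ), t(η)), and Φ₁(μ(ξ,η)) = μ(Φ₁(ξ), Φ₁(η)). -/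
section
variable {k A0 A1 : Type*} [Field k]
  [AddCommGroup A0] [Module k A0] [AddCommGroup A1] [Module k A1]

/-- The multiplication `μ((a,m),(b,n)) := (μ₂(a,b), μ₂(a,n) + μ₂(m,b) + μ₂(d(m),n))`
on `C₁ := A₀ ⊕ A₁`. -/
def muC (T : TwoTermHA k A0 A1) (ξ η : A0 × A1) : A0 × A1 :=
  (T.m00 ξ.1 η.1, T.m01 ξ.1 η.2 + T.m10 ξ.2 η.1 + T.m01 (T.d ξ.2) η.2)

/-- The source map `s(a,m) := a`. -/
def srcC (ξ : A0 × A1) : A0 := ξ.1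

/-- The target map `t(a,m) := a + d(m)`. -/
def tgtC (T : TwoTermHA k A0 A1) (ξ : A0 × A1) : A0 := ξ.1 + T.d ξ.2

/-- The map `Φ₁(a,m) := (α₀(a), α₁(m))` on `C₁ := A₀ ⊕ A₁`. -/
def phiC (T : TwoTermHA k A0 A1) (ξ : A0 × A1) : A0 × A1 := (T.a0 ξ.1, T.a1 ξ.2)

/-- Let `(A₁ →d A₀, μ₂, μ₃, α₀, α₁)` be a 2-term HA∞-algebra.  Then, on `C₁ := A₀ ⊕ A₁`,
`s(μ(ξ,η)) = μ₂(s(ξ), s(η))`, `t(μ(ξ,η)) = μ₂(t(ξ), t(η))` and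
`Φ₁(μ(ξ,η)) = μ(Φ₁(ξ), Φ₁(η))` for all `ξ, η ∈ C₁`. -/
theorem muC_functorial (T : TwoTermHA k A0 A1) :
    ∀ ξ η : A0 × A1,
      srcC (muC T ξ η) = T.m00 (srcC ξ) (srcC η)
        ∧ tgtC T (muC T ξ η) = T.m00 (tgtC T ξ) (tgtC T η)
        ∧ phiC T (muC T ξ η) = muC T (phiC T ξ) (phiC T η) := by
  rintro ⟨a, m⟩ ⟨b, n⟩
  refine ⟨rfl, ?_, ?_⟩
  · simp only [tgtC, muC, srcC, map_add, T.axe, T.axf, LinearMap.add_apply]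
    abel
  · simp only [phiC, muC, Prod.mk.injEq, map_add, T.axb, T.axc, T.axd, T.comm_d,
      and_self]

end
end

section
/- Let R be a (not necessarily commutative) ring and let d₀, d₁, …, dₙ ∈ R satisfy Σ_{i+j=k, 0≤i,j} dᵢ·dⱼ = 0 for every k with 0 ≤ k ≤ n. Then d₀ commutes with the element ω := Σ_{i=1}^{n} dᵢ·d_{n+1−i}, i.e. d₀·ω − ω·d₀ = 0. -/
open Finset

/-- Let `R` be a (not necessarily commutative) ring and `d₀, …, dₙ ∈ R` satisfy
`Σ_{i+j=k} dᵢdⱼ = 0` for every `0 ≤ k ≤ n`.  Then `d₀` commutes with the obstruction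
`ω := Σ_{i=1}^{n} dᵢ d_{n+1−i}`. -/
theorem obstruction_is_cocycle {R : Type*} [Ring R] (n : ℕ) (d : ℕ → R)
    (hd : ∀ m ≤ n, ∑ i ∈ Finset.range (m + 1), d i * d (m - i) = 0) :
    d 0 * (∑ i ∈ Finset.Icc 1 n, d i * d (n + 1 - i))
      - (∑ i ∈ Finset.Icc 1 n, d i * d (n + 1 - i)) * d 0 = 0 := by
  have h1 : ∀ i ∈ Icc 1 n, d 0 * (d i * d (n + 1 - i)) =
      -∑ j ∈ range i, d (j + 1) * d (i - (j + 1)) * d (n + 1 - i) := by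
    intro i hi
    simp only [mem_Icc] at hi
    have h := hd i hi.2
    rw [Finset.sum_range_succ'] at h
    have h0 : d 0 * d i = -∑ j ∈ range i, d (j + 1) * d (i - (j + 1)) := by
      simp only [Nat.sub_zero] at h
      exact eq_neg_of_add_eq_zero_right h
    rw [← mul_assoc, h0, neg_mul, Finset.sum_mul]
  have h2 : ∀ i ∈ Icc 1 n, (d i * d (n + 1 - i)) * d 0 =
      -∑ j ∈ range (n + 1 - i), d i * (d j * d (n + 1 - i - j)) := by
    intro i hi
    simp only [mem_Icc] at hi
    have h := hd (n + 1 - i) (by omega)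
    rw [Finset.sum_range_succ] at h
    have h0 : d (n + 1 - i) * d 0 = -∑ j ∈ range (n + 1 - i), d j * d (n + 1 - i - j) := by
      simp only [Nat.sub_self] at h
      exact eq_neg_of_add_eq_zero_right h
    rw [mul_assoc, h0, mul_neg, Finset.mul_sum]
  rw [Finset.mul_sum, Finset.sum_mul, Finset.sum_congr rfl h1, Finset.sum_congr rfl h2,
    Finset.sum_neg_distrib, Finset.sum_neg_distrib]
  rw [sub_eq_zero, neg_inj, Finset.sum_sigma', Finset.sum_sigma']
  refine Finset.sum_bij' (fun p _ => (⟨p.2 + 1, p.1 - p.2 - 1⟩ : Σ _ : ℕ, ℕ))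
    (fun p _ => (⟨p.1 + p.2, p.1 - 1⟩ : Σ _ : ℕ, ℕ)) ?_ ?_ ?_ ?_ ?_
  · rintro ⟨i, j⟩ hp
    simp only [mem_sigma, mem_Icc, mem_range] at hp ⊢
    omega
  · rintro ⟨i, j⟩ hp
    simp only [mem_sigma, mem_Icc, mem_range] at hp ⊢
    omega
  · rintro ⟨i, j⟩ hp
    simp only [mem_sigma, mem_Icc, mem_range] at hp
    simp only [Sigma.mk.inj_iff, heq_eq_eq]
    omega
  · rintro ⟨i, j⟩ hp
    simp only [mem_sigma, mem_Icc, mem_range] at hp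
    simp only [Sigma.mk.inj_iff, heq_eq_eq]
    omega
  · rintro ⟨i, j⟩ hp
    simp only [mem_sigma, mem_Icc, mem_range] at hp
    have e1 : i - j - 1 = i - (j + 1) := by omega
    have e2 : n + 1 - (j + 1) - (i - (j + 1)) = n + 1 - i := by omega
    dsimp only
    rw [mul_assoc, e1, e2]
end
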